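/- Let x > y ≥ 2 be integers, m odd, n even, m > n ≥ 2. If p = (x^m + y^m)/(x + y) and p - 1 = 2*(x^n - y^n)/(x + y), then we reach a contradiction: x^m + y^m - x - y ≥ 3x^n + 2y^n - x - y > 2x^n - 2y^n, so no solution with y ≥ 2 exists. -/

import Mathlib

/-- There is no solution with `x > y ≥ 2`, `m` odd, `n` even, `m > n ≥ 2`, of
`p = (x^m + y^m)/(x+y)` together with `p - 1 = 2*(x^n - y^n)/(x+y)`. -/
theorem stmt_11 (x y m n p : ℕ) (hy : 2 ≤ y) (hxy : y < x)
    (hn : 2 ≤ n) (hmn : n < m) (hmodd : Odd m) (hneven : Even n)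
    (h1 : p = (x ^ m + y ^ m) / (x + y))
    (h2 : p - 1 = 2 * ((x ^ n - y ^ n) / (x + y))) :
    False := by
  have hx : 3 ≤ x := by omega
  have hd1 : x + y ∣ x ^ m + y ^ m := Odd.nat_add_dvd_pow_add_pow x y hmodd
  obtain ⟨k, hk⟩ := hneven
  have hd2 : x + y ∣ x ^ n - y ^ n := by
    have h := Nat.sub_dvd_pow_sub_pow (x ^ 2) (y ^ 2) k
    have hsq : x + y ∣ x ^ 2 - y ^ 2 := by
      exact ⟨x - y, Nat.sq_sub_sq x y⟩
    have hpow : x ^ n = (x ^ 2) ^ k ∧ y ^ n = (y ^ 2) ^ k := by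
      constructor <;> rw [← pow_mul] <;> congr 1 <;> omega
    rw [hpow.1, hpow.2]
    exact hsq.trans h
  have hp : p * (x + y) = x ^ m + y ^ m := by
    rw [h1, Nat.div_mul_cancel hd1]
  have hq : (p - 1) * (x + y) = 2 * (x ^ n - y ^ n) := by
    rw [h2, mul_assoc, Nat.div_mul_cancel hd2]
  have hp1 : 1 ≤ p := by
    rcases Nat.eq_zero_or_pos p with h0 | h0
    · have : x ^ m + y ^ m = 0 := by rw [← hp, h0, zero_mul]
      have := pow_pos (show 0 < x by omega) m
      omega
    · exact h0
  have key : x ^ m + y ^ m = 2 * (x ^ n - y ^ n) + (x + y) := by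
    have h4 : (p - 1) + 1 = p := by omega
    have h3 : ((p - 1) + 1) * (x + y) = (p - 1) * (x + y) + (x + y) := by ring
    rw [← hp, ← h4, h3, hq]
  -- inequalities
  have hxn : x + y < x ^ n := by
    have h2n : x ^ 2 ≤ x ^ n := Nat.pow_le_pow_right (by omega) hn
    have : x * x ≤ x ^ n := by rwa [← sq]
    nlinarith
  have hxm : 3 * x ^ n ≤ x ^ m := by
    calc 3 * x ^ n ≤ x * x ^ n := by
          exact Nat.mul_le_mul_right _ hx
      _ = x ^ (n + 1) := by ring
      _ ≤ x ^ m := Nat.pow_le_pow_right (by omega) (by omega)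
  have hB : x ^ n - y ^ n ≤ x ^ n := Nat.sub_le _ _
  omega
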